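/- Let G be a C_6-saturated graph on n vertices and let G_1 be the graph obtained from G by deleting all vertices of T_2(G). Then G_1 is C_6-saturated and T_2(G_1) = ∅. -/

import Mathlib

open SimpleGraph

/-- The graph obtained from `G` by adding the edge `uv`. -/
def addEdge {V : Type*} (G : SimpleGraph V) (u v : V) : SimpleGraph V :=
  G ⊔ SimpleGraph.fromEdgeSet {s(u, v)}

/-- `G` contains a cycle of length `k`. -/
def HasCycleLen {V : Type*} (G : SimpleGraph V) (k : ℕ) : Prop :=
  ∃ (v : V) (c : G.Walk v v), c.IsCycle ∧ c.length = k

/-- `G` is `C_k`-saturated. -/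
def IsCSaturated {V : Type*} (k : ℕ) (G : SimpleGraph V) : Prop :=
  ¬ HasCycleLen G k ∧ ∀ u v : V, u ≠ v → ¬ G.Adj u v → HasCycleLen (addEdge G u v) k

/-- degree of a vertex. -/
noncomputable def degOf {V : Type*} (G : SimpleGraph V) (v : V) : ℕ :=
  (G.neighborSet v).ncard

/-- `v` lies in a triangle of `G`. -/
def InTriangle {V : Type*} (G : SimpleGraph V) (v : V) : Prop :=
  ∃ a b, G.Adj v a ∧ G.Adj v b ∧ G.Adj a b

/-- `T₂(G)`: degree-2 vertices in a triangle having a degree-2 neighbour. -/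
def T2set {V : Type*} (G : SimpleGraph V) : Set V :=
  {v | degOf G v = 2 ∧ InTriangle G v ∧ ∃ w, G.Adj v w ∧ degOf G w = 2}

section Aux

variable {V : Type*} {G : SimpleGraph V}

lemma addEdge_adj (u v x y : V) :
    (addEdge G u v).Adj x y ↔ G.Adj x y ∨ (s(x,y) = s(u,v) ∧ x ≠ y) := by
  simp [addEdge]

lemma path_eq_concat {t v : V} :
    ∀ {b : V} (q : G.Walk b t), q.IsPath → s(v,t) ∈ q.edges →
      ∃ (r : G.Walk b v) (h : G.Adj v t), q = r.concat h := by
  intro b q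
  induction q with
  | nil => intro _ h; simp at h
  | @cons b c t hadj q ih =>
    intro hp he
    rw [Walk.cons_isPath_iff] at hp
    rw [Walk.edges_cons, List.mem_cons] at he
    rcases he with he | he
    · rw [Sym2.eq_iff] at he
      rcases he with ⟨hv, ht⟩ | ⟨ht, hv⟩
      · subst hv; subst ht
        have hnil : q = Walk.nil := Walk.isPath_iff_eq_nil.mp hp.1
        subst hnil
        exact ⟨Walk.nil, hadj, rfl⟩
      · subst hv; exact absurd q.end_mem_support hp.2
    · obtain ⟨r, h, rfl⟩ := ih hp.1 he
      exact ⟨Walk.cons hadj r, h, by simp [Walk.concat_cons]⟩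

lemma exists_path_of_cycle_edge {w t v : V} (c : G.Walk w w) (hc : c.IsCycle)
    (he : s(t,v) ∈ c.edges) :
    ∃ p : G.Walk t v, p.IsPath ∧ p.length + 1 = c.length ∧ s(t,v) ∉ p.edges := by
  classical
  have ht : t ∈ c.support := c.fst_mem_support_of_mem_edges he
  have hc' : (c.rotate t ht).IsCycle := hc.rotate ht
  have he' : s(t,v) ∈ (c.rotate t ht).edges := (c.rotate_edges t ht).mem_iff.mpr he
  have hlen : (c.rotate t ht).length = c.length := by
    rw [← Walk.length_edges, ← Walk.length_edges]
    exact (c.rotate_edges t ht).perm.length_eq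
  set c' := c.rotate t ht with hc'def
  clear_value c'
  cases c' with
  | nil => exact absurd rfl hc'.ne_nil
  | @cons _ b _ hadj q =>
    rw [Walk.cons_isCycle_iff] at hc'
    obtain ⟨hq, hnb⟩ := hc'
    rw [Walk.edges_cons, List.mem_cons] at he'
    have htb : t ≠ b := hadj.ne
    rcases he' with heq | hin
    · have hvb : v = b := by
        rw [Sym2.eq_iff] at heq
        rcases heq with ⟨-, h⟩ | ⟨h1, h2⟩
        · exact h
        · exact absurd h1 htb
      subst hvb
      refine ⟨q.reverse, hq.reverse, ?_, ?_⟩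
      · simpa using hlen
      · rw [Walk.edges_reverse, List.mem_reverse]
        exact heq ▸ hnb
    · rw [Sym2.eq_swap] at hin
      obtain ⟨r, hvt, rfl⟩ := path_eq_concat q hq hin
      have hrs : (r.support ++ [t]).Nodup := by
        have := hq.support_nodup
        rwa [Walk.support_concat] at this
      have hrp : r.IsPath := Walk.IsPath.mk' (List.Nodup.of_append_left hrs)
      have htr : t ∉ r.support := by
        have := (List.nodup_append.mp hrs).2.2
        intro hmem
        exact this t hmem t (by simp) rfl
      refine ⟨Walk.cons hadj r, ?_, ?_, ?_⟩
      · rw [Walk.cons_isPath_iff]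
        exact ⟨hrp, htr⟩
      · rw [← hlen, Walk.length_cons, Walk.length_cons, Walk.length_concat]
      · rw [Walk.edges_cons, List.mem_cons]
        rintro (heq2 | hin2)
        · have : v = b := by
            rw [Sym2.eq_iff] at heq2
            rcases heq2 with ⟨-, h⟩ | ⟨h1, h2⟩
            · exact h
            · exact absurd h1 htb
          subst this
          apply hnb
          rw [Walk.edges_concat, Sym2.eq_swap]
          simp
        · have : s(v,t) ∉ r.edges := by
            have := hq.edges_nodup
            rw [Walk.edges_concat] at this
            have h2 := (List.nodup_append.mp (by simpa using this)).2.2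
            intro hmem
            exact h2 _ hmem _ (by simp) rfl
          rw [Sym2.eq_swap] at hin2
          exact this hin2

lemma addEdge_edge_mem {u v : V} {e : Sym2 V} (he : e ∈ (addEdge G u v).edgeSet) :
    e ∈ G.edgeSet ∨ e = s(u,v) := by
  rw [addEdge, edgeSet_sup] at he
  rcases he with h | h
  · exact Or.inl h
  · rw [edgeSet_fromEdgeSet] at h
    exact Or.inr h.1

lemma exists_path5 (hG : IsCSaturated 6 G) {u v : V} (hne : u ≠ v) (hnadj : ¬G.Adj u v) :
    ∃ p : G.Walk u v, p.IsPath ∧ p.length = 5 := by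
  obtain ⟨w, c, hc, hl⟩ := hG.2 u v hne hnadj
  have hedge : s(u,v) ∈ c.edges := by
    by_contra h
    refine hG.1 ⟨w, c.transfer G ?_, hc.transfer _, by rw [Walk.length_transfer]; exact hl⟩
    intro e hee
    rcases addEdge_edge_mem (c.edges_subset_edgeSet hee) with h1 | h1
    · exact h1
    · exact absurd (h1 ▸ hee) h
  obtain ⟨p, hp, hpl, hpe⟩ := exists_path_of_cycle_edge c hc hedge
  have hes : ∀ e ∈ p.edges, e ∈ G.edgeSet := by
    intro e hee
    rcases addEdge_edge_mem (p.edges_subset_edgeSet hee) with h1 | h1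
    · exact h1
    · exact absurd (h1 ▸ hee) hpe
  refine ⟨p.transfer G hes, hp.transfer _, ?_⟩
  rw [Walk.length_transfer]
  omega

lemma walk_length5_decomp {x y : V} (p : G.Walk x y) (h : p.length = 5) :
    ∃ (a b c d : V) (_ : G.Adj x a) (_ : G.Adj a b) (_ : G.Adj b c)
      (_ : G.Adj c d) (_ : G.Adj d y), p.support = [x, a, b, c, d, y] := by
  cases p with
  | nil => simp at h
  | cons h1 p => cases p with
    | nil => simp at h
    | cons h2 p => cases p with
      | nil => simp at h
      | cons h3 p => cases p with
        | nil => simp at h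
        | cons h4 p => cases p with
          | nil => simp at h
          | cons h5 p => cases p with
            | nil => exact ⟨_, _, _, _, h1, h2, h3, h4, h5, by simp⟩
            | cons h6 p => simp [Walk.length_cons] at h

lemma nodup6 {a b c d e f : V} (h : [a,b,c,d,e,f].Nodup) :
    a≠b ∧ a≠c ∧ a≠d ∧ a≠e ∧ a≠f ∧ b≠c ∧ b≠d ∧ b≠e ∧ b≠f ∧ c≠d ∧ c≠e ∧ c≠f ∧
    d≠e ∧ d≠f ∧ e≠f := by
  simp [List.nodup_cons, not_or] at h
  tauto

lemma sat_decomp (hG : IsCSaturated 6 G) {u v : V} (hne : u ≠ v) (hnadj : ¬ G.Adj u v) :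
    ∃ p1 p2 p3 p4 : V, G.Adj u p1 ∧ G.Adj p1 p2 ∧ G.Adj p2 p3 ∧ G.Adj p3 p4 ∧
      G.Adj p4 v ∧ [u,p1,p2,p3,p4,v].Nodup := by
  obtain ⟨p, hp, hl⟩ := exists_path5 hG hne hnadj
  obtain ⟨p1, p2, p3, p4, h1, h2, h3, h4, h5, hsupp⟩ := walk_length5_decomp p hl
  exact ⟨p1, p2, p3, p4, h1, h2, h3, h4, h5, hsupp ▸ hp.support_nodup⟩

def liftWalk {s : Set V} :
    ∀ {x y : V} (p : G.Walk x y) (hs : ∀ z ∈ p.support, z ∈ s),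
      (G.induce s).Walk ⟨x, hs x p.start_mem_support⟩ ⟨y, hs y p.end_mem_support⟩
  | _, _, Walk.nil, _ => Walk.nil
  | _, _, Walk.cons h p, hs =>
      Walk.cons (by exact h) (liftWalk p (fun z hz => hs z (by simp [hz])))

lemma liftWalk_support {s : Set V} :
    ∀ {x y : V} (p : G.Walk x y) (hs : ∀ z ∈ p.support, z ∈ s),
      (liftWalk p hs).support.map Subtype.val = p.support
  | _, _, Walk.nil, _ => by simp [liftWalk]
  | _, _, Walk.cons h p, hs => by
      exact congrArg (List.cons _) (liftWalk_support p _)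

lemma liftWalk_length {s : Set V} :
    ∀ {x y : V} (p : G.Walk x y) (hs : ∀ z ∈ p.support, z ∈ s),
      (liftWalk p hs).length = p.length
  | _, _, Walk.nil, _ => rfl
  | _, _, Walk.cons h p, hs => by
      exact congrArg Nat.succ (liftWalk_length p _)

end Aux

section Fin

variable {V : Type*} [Finite V] {G : SimpleGraph V}

lemma neighborSet_pair {z α β : V} (h2 : degOf G z = 2) (ha : G.Adj z α)
    (hb : G.Adj z β) (hne : α ≠ β) : G.neighborSet z = {α, β} := by
  symm
  apply Set.eq_of_subset_of_ncard_le
  · rintro x (rfl | rfl)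
    · exact ha
    · exact hb
  · rw [show (G.neighborSet z).ncard = 2 from h2, Set.ncard_pair hne]
  · exact Set.toFinite _

omit [Finite V] in
lemma mem_pair_of_adj {z α β x : V} (hN : G.neighborSet z = {α, β}) (h : G.Adj z x) :
    x = α ∨ x = β := by
  have : x ∈ G.neighborSet z := h
  rw [hN] at this
  simpa using this

lemma T2_struct {z : V} (hz : z ∈ T2set G) :
    ∃ α β, G.Adj z α ∧ G.Adj z β ∧ G.Adj α β ∧ α ∈ T2set G ∧
      G.neighborSet z = {α, β} ∧ G.neighborSet α = {z, β} := by
  obtain ⟨hd, ⟨x, y, hx, hy, hxy⟩, w, hw, hdw⟩ := hz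
  have hne : x ≠ y := hxy.ne
  have hNz : G.neighborSet z = {x, y} := neighborSet_pair hd hx hy hne
  rcases mem_pair_of_adj hNz hw with rfl | rfl
  · have hNw : G.neighborSet w = {z, y} := neighborSet_pair hdw hx.symm hxy hy.ne
    exact ⟨w, y, hx, hy, hxy, ⟨hdw, ⟨z, y, hx.symm, hxy, hy⟩, z, hx.symm, hd⟩, hNz, hNw⟩
  · have hNw : G.neighborSet w = {z, x} := neighborSet_pair hdw hy.symm hxy.symm hx.ne
    exact ⟨w, x, hy, hx, hxy.symm, ⟨hdw, ⟨z, x, hy.symm, hxy.symm, hx⟩, z, hy.symm, hd⟩,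
      by rw [hNz, Set.pair_comm], hNw⟩

lemma pendant {z t : V} (hz : z ∉ T2set G) (ht : t ∈ T2set G) (hadj : G.Adj z t) :
    ∃ x, x ∈ T2set G ∧ G.Adj z x ∧ G.Adj t x ∧
      G.neighborSet t = {z, x} ∧ G.neighborSet x = {z, t} := by
  obtain ⟨α, β, hα, hβ, hαβ, hαT2, hNt, hNα⟩ := T2_struct ht
  rcases mem_pair_of_adj hNt hadj.symm with rfl | rfl
  · exact absurd hαT2 hz
  · exact ⟨α, hαT2, hαβ.symm, hα, by rw [hNt, Set.pair_comm], by rw [hNα, Set.pair_comm]⟩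

lemma lemA {w0 w1 w2 w3 : V} (h0 : w0 ∉ T2set G) (a01 : G.Adj w0 w1)
    (a12 : G.Adj w1 w2) (a23 : G.Adj w2 w3) (h02 : w0 ≠ w2) (h30 : w3 ≠ w0)
    (h31 : w3 ≠ w1) : w1 ∉ T2set G := by
  intro h1
  obtain ⟨α, β, hα, hβ, hαβ, hαT2, hN1, hNα⟩ := T2_struct h1
  rcases mem_pair_of_adj hN1 a01.symm with rfl | hw0β
  · exact h0 hαT2
  · subst hw0β
    rcases mem_pair_of_adj hN1 a12 with rfl | rfl
    · rcases mem_pair_of_adj hNα a23 with rfl | rfl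
      · exact h31 rfl
      · exact h30 rfl
    · exact h02 rfl

lemma lemB {w0 w1 w2 w3 w4 : V} (a01 : G.Adj w0 w1) (a12 : G.Adj w1 w2)
    (a23 : G.Adj w2 w3) (a34 : G.Adj w3 w4) (h02 : w0 ≠ w2) (h03 : w0 ≠ w3)
    (h13 : w1 ≠ w3) (h42 : w4 ≠ w2) (h41 : w4 ≠ w1) : w2 ∉ T2set G := by
  intro h2
  obtain ⟨α, β, hα, hβ, hαβ, hαT2, hN2, hNα⟩ := T2_struct h2
  rcases mem_pair_of_adj hN2 a12.symm with rfl | hw1β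
  · rcases mem_pair_of_adj hN2 a23 with rfl | rfl
    · exact h13 rfl
    · rcases mem_pair_of_adj hNα a01.symm with rfl | rfl
      · exact h02 rfl
      · exact h03 rfl
  · subst hw1β
    rcases mem_pair_of_adj hN2 a23 with rfl | rfl
    · rcases mem_pair_of_adj hNα a34 with rfl | rfl
      · exact h42 rfl
      · exact h41 rfl
    · exact h13 rfl

end Fin

/-- Deleting T2(G) from a C6-saturated graph yields a C6-saturated graph with empty T2. -/
theorem delete_T2_saturated {V : Type*} [Fintype V] (G : SimpleGraph V)
    (hG : IsCSaturated 6 G) :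
    IsCSaturated 6 (SimpleGraph.induce ((T2set G)ᶜ) G) ∧
      T2set (SimpleGraph.induce ((T2set G)ᶜ) G) = ∅ := by
  set s : Set V := (T2set G)ᶜ with hs
  set G1 : SimpleGraph s := G.induce s with hG1
  have hinduceAdj : ∀ x y : s, G1.Adj x y ↔ G.Adj ↑x ↑y := fun x y => Iff.rfl
  -- no 6-cycle in G1
  have hnoC : ¬ HasCycleLen G1 6 := by
    rintro ⟨v, c, hc, hl⟩
    refine hG.1 ⟨↑v, c.map (Embedding.induce s).toHom, ?_, (Walk.length_map _ _).trans hl⟩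
    exact hc.map Subtype.val_injective
  refine ⟨⟨hnoC, ?_⟩, ?_⟩
  · -- saturation
    intro u v hne hnadj
    have hneV : (u : V) ≠ v := fun h => hne (Subtype.ext h)
    have hnadjV : ¬ G.Adj ↑u ↑v := hnadj
    obtain ⟨p, hp, hl5⟩ := exists_path5 hG hneV hnadjV
    obtain ⟨p1, p2, p3, p4, h1, h2, h3, h4, h5, hsupp⟩ := walk_length5_decomp p hl5
    have hnd := nodup6 (hsupp ▸ hp.support_nodup)
    obtain ⟨n01, n02, n03, n04, n05, n12, n13, n14, n15, n23, n24, n25, n34, n35, n45⟩ := hnd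
    have hu2 : (u : V) ∉ T2set G := u.2
    have hv2 : (v : V) ∉ T2set G := v.2
    have hp1 : p1 ∉ T2set G := lemA hu2 h1 h2 h3 n02 (Ne.symm n03) (Ne.symm n13)
    have hp2 : p2 ∉ T2set G := lemB h1 h2 h3 h4 n02 n03 n13 (Ne.symm n24) (Ne.symm n14)
    have hp3 : p3 ∉ T2set G := lemB h2 h3 h4 h5 n13 n14 n24 (Ne.symm n35) (Ne.symm n25)
    have hp4 : p4 ∉ T2set G := lemA hv2 h5.symm h4.symm h3.symm (Ne.symm n35) n25 n24
    have hall : ∀ z ∈ p.support, z ∈ s := by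
      rw [hsupp]
      intro z hz
      simp only [List.mem_cons, List.not_mem_nil, or_false] at hz
      rcases hz with rfl | rfl | rfl | rfl | rfl | rfl
      · exact u.2
      · exact hp1
      · exact hp2
      · exact hp3
      · exact hp4
      · exact v.2
    let q0 : G1.Walk u v := liftWalk p hall
    have hq0sup : q0.support.map Subtype.val = p.support := liftWalk_support p hall
    have hq0path : q0.IsPath := by
      apply Walk.IsPath.mk'
      apply List.Nodup.of_map Subtype.val
      rw [hq0sup]
      exact hp.support_nodup
    have hq0len : q0.length = 5 := by
      have : q0.length = p.length := liftWalk_length p hall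
      rw [this, hl5]
    -- transfer into addEdge G1 u v and close the cycle
    have hsub : ∀ e ∈ q0.edges, e ∈ (addEdge G1 u v).edgeSet := by
      intro e he
      exact edgeSet_mono le_sup_left (q0.edges_subset_edgeSet he)
    have hadjnew : (addEdge G1 u v).Adj v u := by
      rw [addEdge_adj]
      exact Or.inr ⟨Sym2.eq_swap, hne.symm⟩
    refine ⟨v, Walk.cons hadjnew (q0.transfer _ hsub), ?_, ?_⟩
    · rw [Walk.cons_isCycle_iff]
      refine ⟨hq0path.transfer _, ?_⟩
      rw [Walk.edges_transfer]
      intro hmem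
      have : G1.Adj v u := Walk.adj_of_mem_edges q0 hmem
      exact hnadj this.symm
    · rw [Walk.length_cons, Walk.length_transfer, hq0len]
  · -- T2 of G1 is empty
    apply Set.eq_empty_iff_forall_notMem.mpr
    intro v hv
    obtain ⟨α, β, hvα, hvβ, hαβ, hαT2', hNv, hNα⟩ := T2_struct (G := G1) hv
    have hva : G.Adj ↑v ↑α := hvα
    have hvb : G.Adj ↑v ↑β := hvβ
    have hab : G.Adj ↑α ↑β := hαβ
    have hv2 : (v : V) ∉ T2set G := v.2
    have hα2 : (α : V) ∉ T2set G := α.2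
    have hβ2 : (β : V) ∉ T2set G := β.2
    have key1 : ∀ y : V, G.Adj ↑v y → y ∉ T2set G → (y = ↑α ∨ y = ↑β) := by
      intro y hy hyT
      have hys : y ∈ s := hyT
      rcases mem_pair_of_adj hNv (show G1.Adj v ⟨y, hys⟩ from hy) with h | h
      · exact Or.inl (congrArg Subtype.val h)
      · exact Or.inr (congrArg Subtype.val h)
    have key2 : ∀ y : V, G.Adj ↑α y → y ∉ T2set G → (y = ↑v ∨ y = ↑β) := by
      intro y hy hyT
      have hys : y ∈ s := hyT
      rcases mem_pair_of_adj hNα (show G1.Adj α ⟨y, hys⟩ from hy) with h | h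
      · exact Or.inl (congrArg Subtype.val h)
      · exact Or.inr (congrArg Subtype.val h)
    by_cases hEx : ∃ t, t ∈ T2set G ∧ G.Adj ↑α t
    · -- Case 2 : α has a pendant T2 pair (t, x)
      obtain ⟨t, htT2, hαt⟩ := hEx
      obtain ⟨x, hxT2, hαx, htx, hNt, hNx⟩ := pendant hα2 htT2 hαt
      have hvt_ne : (v : V) ≠ t := fun h => hv2 (h ▸ htT2)
      have hvt_nadj : ¬ G.Adj ↑v t := by
        intro h
        rcases mem_pair_of_adj hNt h.symm with h' | h'
        · exact hva.ne h'
        · exact hv2 (h' ▸ hxT2)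
      obtain ⟨p1, p2, p3, p4, e0, e1, e2, e3, e4, hnd⟩ := sat_decomp hG hvt_ne hvt_nadj
      obtain ⟨n01, n02, n03, n04, n05, n12, n13, n14, n15, n23, n24, n25, n34, n35, n45⟩ :=
        nodup6 hnd
      rcases mem_pair_of_adj hNt e4.symm with rfl | rfl
      · -- p4 = ↑α
        by_cases hT3 : p3 ∈ T2set G
        · obtain ⟨x₃, hx3T2, hαx3, hp3x3, hNp3, hNx3⟩ := pendant hα2 hT3 e3.symm
          rcases mem_pair_of_adj hNp3 e2.symm with h | rfl
          · exact n24 h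
          · rcases mem_pair_of_adj hNx3 e1.symm with h | h
            · exact n14 h
            · exact n13 h
        · rcases key2 p3 e3.symm hT3 with h | hp3β
          · exact n03 h.symm
          · by_cases hT1 : p1 ∈ T2set G
            · obtain ⟨x₁, hx1T2, hvx1, hp1x1, hNp1, hNx1⟩ := pendant hv2 hT1 e0
              rcases mem_pair_of_adj hNp1 e1 with h | rfl
              · exact n02 h.symm
              · rcases mem_pair_of_adj hNx1 e2 with h | h
                · exact n03 h.symm
                · exact n13 h.symm
            · rcases key1 p1 e0 hT1 with h | h
              · exact n14 h
              · exact n13 (h.trans hp3β.symm)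
      · -- p4 = x
        rcases mem_pair_of_adj hNx e3.symm with rfl | h
        · -- p3 = ↑α
          by_cases hT2' : p2 ∈ T2set G
          · obtain ⟨x₂, hx2T2, hαx2, hp2x2, hNp2, hNx2⟩ := pendant hα2 hT2' e2.symm
            rcases mem_pair_of_adj hNp2 e1.symm with h | rfl
            · exact n13 h
            · rcases mem_pair_of_adj hNx2 e0.symm with h | h
              · exact n03 h
              · exact n02 h
          · rcases key2 p2 e2.symm hT2' with h | hp2β
            · exact n02 h.symm
            · by_cases hT1 : p1 ∈ T2set G
              · obtain ⟨x₁, hx1T2, hvx1, hp1x1, hNp1, hNx1⟩ := pendant hv2 hT1 e0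
                rcases mem_pair_of_adj hNp1 e1 with h | h
                · exact n02 h.symm
                · apply hβ2
                  rw [← hp2β, h]
                  exact hx1T2
              · rcases key1 p1 e0 hT1 with h | h
                · exact n13 h
                · exact n12 (h.trans hp2β.symm)
        · exact n35 h
    · -- Case : α has no T2 neighbour
      have hNαfull : G.neighborSet (↑α : V) = {↑v, ↑β} := by
        apply Set.Subset.antisymm
        · intro y hy
          have hyadj : G.Adj ↑α y := hy
          have hyT : y ∉ T2set G := fun h => hEx ⟨y, h, hyadj⟩
          rcases key2 y hyadj hyT with rfl | rfl
          · exact Set.mem_insert _ _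
          · exact Set.mem_insert_of_mem _ rfl
        · rintro y (rfl | rfl)
          · exact hva.symm
          · exact hab
      by_cases hExv : ∃ t, t ∈ T2set G ∧ G.Adj ↑v t
      · -- Case 3 : v has a pendant T2 pair (t, x)
        obtain ⟨t, htT2, hvt⟩ := hExv
        obtain ⟨x, hxT2, hvx, htx, hNt, hNx⟩ := pendant hv2 htT2 hvt
        have hαt_ne : (↑α : V) ≠ t := fun h => hα2 (h ▸ htT2)
        have hαt_nadj : ¬ G.Adj ↑α t := by
          intro h
          rcases mem_pair_of_adj hNt h.symm with h' | h'
          · exact hva.ne' h'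
          · exact hα2 (h' ▸ hxT2)
        obtain ⟨p1, p2, p3, p4, e0, e1, e2, e3, e4, hnd⟩ := sat_decomp hG hαt_ne hαt_nadj
        obtain ⟨n01, n02, n03, n04, n05, n12, n13, n14, n15, n23, n24, n25, n34, n35, n45⟩ :=
          nodup6 hnd
        rcases mem_pair_of_adj hNt e4.symm with rfl | rfl
        · -- p4 = ↑v
          by_cases hT3 : p3 ∈ T2set G
          · obtain ⟨x₃, hx3T2, hvx3, hp3x3, hNp3, hNx3⟩ := pendant hv2 hT3 e3.symm
            rcases mem_pair_of_adj hNp3 e2.symm with h | rfl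
            · exact n24 h
            · rcases mem_pair_of_adj hNx3 e1.symm with h | h
              · exact n14 h
              · exact n13 h
          · rcases key1 p3 e3.symm hT3 with h | hp3β
            · exact n03 h.symm
            · rcases mem_pair_of_adj hNαfull e0 with h | h
              · exact n14 h
              · exact n13 (h.trans hp3β.symm)
        · -- p4 = x
          rcases mem_pair_of_adj hNx e3.symm with rfl | h
          · -- p3 = ↑v
            rcases mem_pair_of_adj hNαfull e0 with h | hp1β
            · exact n13 h
            · by_cases hT2' : p2 ∈ T2set G
              · obtain ⟨x₂, hx2T2, hvx2, hp2x2, hNp2, hNx2⟩ := pendant hv2 hT2' e2.symm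
                rcases mem_pair_of_adj hNp2 e1.symm with h | h
                · exact n13 h
                · apply hβ2
                  rw [← hp1β, h]
                  exact hx2T2
              · rcases key1 p2 e2.symm hT2' with h | h
                · exact n02 h.symm
                · exact n12 (hp1β.trans h.symm)
          · exact n35 h
      · -- neither v nor α has a T2 neighbour : v ∈ T2set G, contradiction
        have hNvfull : G.neighborSet (↑v : V) = {↑α, ↑β} := by
          apply Set.Subset.antisymm
          · intro y hy
            have hyadj : G.Adj ↑v y := hy
            have hyT : y ∉ T2set G := fun h => hExv ⟨y, h, hyadj⟩
            rcases key1 y hyadj hyT with rfl | rfl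
            · exact Set.mem_insert _ _
            · exact Set.mem_insert_of_mem _ rfl
          · rintro y (rfl | rfl)
            · exact hva
            · exact hvb
        apply hv2
        refine ⟨?_, ⟨↑α, ↑β, hva, hvb, hab⟩, ↑α, hva, ?_⟩
        · show (G.neighborSet (↑v : V)).ncard = 2
          rw [hNvfull]
          exact Set.ncard_pair hab.ne
        · show (G.neighborSet (↑α : V)).ncard = 2
          rw [hNαfull]
          exact Set.ncard_pair hvb.ne
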